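/- Let (X, δ) be a hyperconvex and bounded diversity with induced metric space (X, d). Then every nonexpansive mapping T : (X, d) → (X, d) has a fixed point, i.e., there exists x ∈ X with T(x) = x. -/

import Mathlib

set_option maxHeartbeats 1000000


/-- A diversity on `X`: a real-valued function on finite subsets of `X` which is
nonnegative, vanishes exactly on sets of cardinality at most one, and satisfies the
triangle inequality `δ(A ∪ C) ≤ δ(A ∪ B) + δ(B ∪ C)` for nonempty `B`. -/
structure Diversity (X : Type*) [DecidableEq X] where
  delta : Finset X → ℝ
  nonneg : ∀ A, 0 ≤ delta A
  eq_zero_iff : ∀ A, delta A = 0 ↔ A.card ≤ 1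
  triangle : ∀ A B C : Finset X, B.Nonempty →
    delta (A ∪ C) ≤ delta (A ∪ B) + delta (B ∪ C)

namespace Diversity

variable {X : Type*} [DecidableEq X]

/-- A diversity is hyperconvex if for every `r : ⟨X⟩ → ℝ` with `r ∅ = 0` such that
`δ(⋃_{A ∈ 𝒜} A) ≤ ∑_{A ∈ 𝒜} r A` for every finite collection `𝒜` of finite subsets
of `X`, there is `z ∈ X` with `δ({z} ∪ Y) ≤ r Y` for all finite `Y ⊆ X`. -/
def Hyperconvex (D : Diversity X) : Prop :=
  ∀ r : Finset X → ℝ, r ∅ = 0 →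
    (∀ 𝒜 : Finset (Finset X), D.delta (𝒜.sup id) ≤ ∑ A ∈ 𝒜, r A) →
    ∃ z : X, ∀ Y : Finset X, D.delta (insert z Y) ≤ r Y

/-- A diversity is bounded if its values are uniformly bounded above. -/
def Bounded (D : Diversity X) : Prop :=
  ∃ M : ℝ, 0 ≤ M ∧ ∀ A : Finset X, D.delta A ≤ M

end Diversity


namespace FPAux

open Finset

variable {X : Type*} [DecidableEq X] (D : Diversity X)

lemma delta_empty : D.delta ∅ = 0 := (D.eq_zero_iff ∅).mpr (by simp)

lemma delta_singleton (x : X) : D.delta {x} = 0 := (D.eq_zero_iff {x}).mpr (by simp)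

lemma delta_le_insert (b : X) (C : Finset X) : D.delta C ≤ D.delta (insert b C) := by
  have h := D.triangle C {b} ∅ (by simp)
  simp only [Finset.union_empty] at h
  calc D.delta C ≤ D.delta (C ∪ {b}) + D.delta {b} := h
    _ = D.delta (insert b C) := by
        rw [delta_singleton, add_zero, Finset.union_comm, ← Finset.insert_eq]

lemma delta_mono {A B : Finset X} (h : A ⊆ B) : D.delta A ≤ D.delta B := by
  have key : ∀ C : Finset X, D.delta A ≤ D.delta (A ∪ C) := by
    intro C
    induction C using Finset.induction_on with
    | empty => simp
    | insert b C' hb ih =>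
      calc D.delta A ≤ D.delta (A ∪ C') := ih
        _ ≤ D.delta (insert b (A ∪ C')) := delta_le_insert D b _
        _ = D.delta (A ∪ insert b C') := by rw [Finset.union_insert]
  calc D.delta A ≤ D.delta (A ∪ B) := key B
    _ = D.delta B := by rw [Finset.union_eq_right.mpr h]

lemma star (z : X) (𝒜 : Finset (Finset X)) :
    D.delta (insert z (𝒜.sup id)) ≤ ∑ A ∈ 𝒜, D.delta (insert z A) := by
  induction 𝒜 using Finset.induction_on with
  | empty => simp [delta_singleton]
  | insert A 𝒜' hA ih =>
    rw [Finset.sup_insert, Finset.sum_insert hA]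
    have hins : insert z (id A ⊔ 𝒜'.sup id) = A ∪ insert z (𝒜'.sup id) := by
      simp only [id]
      ext t; simp [Finset.mem_insert, Finset.mem_union, or_comm, or_left_comm, or_assoc]
    have htri := D.triangle A {z} (insert z (𝒜'.sup id)) (by simp)
    have h1 : A ∪ {z} = insert z A := by
      rw [Finset.union_comm, ← Finset.insert_eq]
    have h2 : ({z} : Finset X) ∪ insert z (𝒜'.sup id) = insert z (𝒜'.sup id) := by
      apply Finset.union_eq_right.mpr; simp
    rw [h1, h2] at htri
    rw [hins]
    exact le_trans htri (by linarith)

lemma star_pairs (a : X) (G : Finset X) :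
    D.delta (insert a G) ≤ ∑ b ∈ G, D.delta {a, b} := by
  induction G using Finset.induction_on with
  | empty => simp [delta_singleton]
  | insert b G' hb ih =>
    rw [Finset.sum_insert hb]
    have hins : insert a (insert b G') = {b} ∪ insert a G' := by
      ext t; simp [Finset.mem_insert, or_comm, or_left_comm, or_assoc]
    have htri := D.triangle {b} {a} (insert a G') (by simp)
    have h1 : ({b} : Finset X) ∪ {a} = {a, b} := by
      ext t; simp [or_comm]
    have h2 : ({a} : Finset X) ∪ insert a G' = insert a G' := by
      apply Finset.union_eq_right.mpr; simp
    rw [h1, h2] at htri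
    rw [hins]
    exact le_trans htri (by linarith)

/-- The "ball" defined by a constraint function `r`. -/
def Ball (r : Finset X → ℝ) : Set X := {z | ∀ Y, D.delta (insert z Y) ≤ r Y}

/-- Admissibility of a constraint function. -/
def Adm (r : Finset X → ℝ) : Prop :=
  r ∅ = 0 ∧ ∀ 𝒜 : Finset (Finset X), D.delta (𝒜.sup id) ≤ ∑ A ∈ 𝒜, r A

lemma ball_mono {r s : Finset X → ℝ} (h : r ≤ s) : Ball D r ⊆ Ball D s :=
  fun z hz Y => le_trans (hz Y) (h Y)

lemma adm_sum_of_mem {r : Finset X → ℝ} {z : X} (hz : z ∈ Ball D r)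
    (𝒜 : Finset (Finset X)) : D.delta (𝒜.sup id) ≤ ∑ A ∈ 𝒜, r A := by
  calc D.delta (𝒜.sup id) ≤ D.delta (insert z (𝒜.sup id)) := delta_le_insert D z _
    _ ≤ ∑ A ∈ 𝒜, D.delta (insert z A) := star D z 𝒜
    _ ≤ ∑ A ∈ 𝒜, r A := Finset.sum_le_sum (fun A _ => hz A)

lemma adm_nonneg {r : Finset X → ℝ} (hr : Adm D r) (Y : Finset X) : 0 ≤ r Y := by
  have h := hr.2 {Y}
  simp only [Finset.sup_singleton, Finset.sum_singleton, id] at h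
  exact le_trans (D.nonneg Y) h

end FPAux

namespace FPAux

open Finset

variable {X : Type*} [DecidableEq X] (D : Diversity X)

/-- The collection of admissible constraint functions with `T`-invariant ball. -/
def S (T : X → X) : Set (Finset X → ℝ) :=
  {r | Adm D r ∧ Set.MapsTo T (Ball D r) (Ball D r)}

lemma chain_exists {c : Set (Finset X → ℝ)} (hc : IsChain (· ≤ ·) c)
    (hcne : c.Nonempty) {𝒜 : Finset (Finset X)} (P : Finset X → ℝ → Prop)
    (hP : ∀ A ∈ 𝒜, ∃ r ∈ c, P A (r A))
    (hmono : ∀ A, ∀ s t : Finset X → ℝ, s ≤ t → P A (t A) → P A (s A)) :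
    ∃ r ∈ c, ∀ A ∈ 𝒜, P A (r A) := by
  induction 𝒜 using Finset.induction_on with
  | empty =>
    obtain ⟨r, hr⟩ := hcne
    exact ⟨r, hr, by simp⟩
  | insert A 𝒜' hA ih =>
    obtain ⟨r, hrc, hr⟩ := ih (fun B hB => hP B (Finset.mem_insert_of_mem hB))
    obtain ⟨r', hr'c, hr'⟩ := hP A (Finset.mem_insert_self A 𝒜')
    rcases eq_or_ne r r' with rfl | hne
    · exact ⟨r, hrc, fun B hB => by
        rcases Finset.mem_insert.mp hB with rfl | hB
        · exact hr'
        · exact hr B hB⟩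
    · rcases hc hrc hr'c hne with h | h
      · exact ⟨r, hrc, fun B hB => by
          rcases Finset.mem_insert.mp hB with rfl | hB
          · exact hmono B r r' h hr'
          · exact hr B hB⟩
      · exact ⟨r', hr'c, fun B hB => by
          rcases Finset.mem_insert.mp hB with rfl | hB
          · exact hr'
          · exact hmono B r' r h (hr B hB)⟩

lemma top_mem_S {M : ℝ} (hM0 : 0 ≤ M) (hM : ∀ A : Finset X, D.delta A ≤ M)
    (T : X → X) : (fun Y : Finset X => if Y = ∅ then 0 else M) ∈ S D T := by
  constructor
  · constructor
    · simp
    · intro 𝒜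
      rcases (𝒜.sup id).eq_empty_or_nonempty with hs | hs
      · rw [hs, delta_empty]
        apply Finset.sum_nonneg
        intro A _
        split <;> simp [hM0]
      · obtain ⟨x, hx⟩ := hs
        obtain ⟨A, hA, hxA⟩ := Finset.mem_sup.mp hx
        have hAne : A ≠ ∅ := fun h => by simp [h] at hxA
        calc D.delta (𝒜.sup id) ≤ M := hM _
          _ = ∑ B ∈ {A}, (fun Y : Finset X => if Y = ∅ then 0 else M) B := by
              simp [hAne]
          _ ≤ ∑ B ∈ 𝒜, (fun Y : Finset X => if Y = ∅ then 0 else M) B := by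
              apply Finset.sum_le_sum_of_subset_of_nonneg
              · simp [hA]
              · intro B _ _
                show (0:ℝ) ≤ if B = ∅ then 0 else M
                split <;> simp [hM0]
  · intro z _ Y
    show D.delta (insert (T z) Y) ≤ if Y = ∅ then 0 else M
    by_cases hY : Y = ∅
    · subst hY
      rw [if_pos rfl]
      exact (delta_singleton D (T z)).le
    · rw [if_neg hY]
      exact hM _

lemma exists_minimal (hB : D.Bounded) (T : X → X) :
    ∃ r₀ ∈ S D T, ∀ r ∈ S D T, r ≤ r₀ → r₀ ≤ r := by
  obtain ⟨M, hM0, hM⟩ := hB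
  have zorn := @zorn_le₀ ((Finset X → ℝ)ᵒᵈ) _
    (OrderDual.ofDual ⁻¹' (S D T)) ?_
  · obtain ⟨m, hm⟩ := zorn
    refine ⟨OrderDual.ofDual m, hm.1, fun r hr hrm => hm.2 (y := OrderDual.toDual r) hr hrm⟩
  · intro cd hcd hchain
    set c : Set (Finset X → ℝ) := OrderDual.ofDual '' cd with hc
    have hcS : c ⊆ S D T := by
      rintro r ⟨rd, hrd, rfl⟩; exact hcd hrd
    have hcchain : IsChain (· ≤ ·) c := by
      rintro _ ⟨p, hp, rfl⟩ _ ⟨q, hq, rfl⟩ hne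
      rcases hchain hp hq (fun h => hne (congrArg _ h)) with h | h
      · exact Or.inr h
      · exact Or.inl h
    rcases c.eq_empty_or_nonempty with hce | hcne
    · refine ⟨OrderDual.toDual (fun Y => if Y = ∅ then 0 else M), top_mem_S D hM0 hM T, ?_⟩
      intro z hz
      exact absurd (Set.mem_image_of_mem _ hz) (by rw [← hc, hce]; simp)
    · set rInf : Finset X → ℝ := fun Y => sInf {t | ∃ r ∈ c, t = r Y} with hrInf
      have hbdd : ∀ Y : Finset X, ∀ t ∈ {t | ∃ r ∈ c, t = r Y}, 0 ≤ t := by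
        rintro Y t ⟨r, hrc, rfl⟩
        exact adm_nonneg D (hcS hrc).1 Y
      have hsetne : ∀ Y : Finset X, {t | ∃ r ∈ c, t = r Y}.Nonempty := by
        intro Y
        obtain ⟨r, hrc⟩ := hcne
        exact ⟨r Y, r, hrc, rfl⟩
      have hle : ∀ r ∈ c, rInf ≤ r := by
        intro r hrc Y
        exact csInf_le ⟨0, hbdd Y⟩ ⟨r, hrc, rfl⟩
      have hrInf_nonneg : ∀ Y, 0 ≤ rInf Y := fun Y => le_csInf (hsetne Y) (hbdd Y)
      have hrInfS : rInf ∈ S D T := by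
        refine ⟨⟨?_, ?_⟩, ?_⟩
        · obtain ⟨r, hrc⟩ := hcne
          have h0 : rInf ∅ ≤ 0 := by
            have h1 := hle r hrc ∅
            rw [(hcS hrc).1.1] at h1
            exact h1
          exact le_antisymm h0 (hrInf_nonneg ∅)
        · intro 𝒜
          rcases 𝒜.eq_empty_or_nonempty with rfl | h𝒜ne
          · simp [delta_empty]
          · refine le_of_forall_pos_le_add ?_
            intro ε hε
            have hcard : (0:ℝ) < 𝒜.card := by
              exact_mod_cast Finset.card_pos.mpr h𝒜ne
            have hchoice : ∀ A ∈ 𝒜, ∃ r ∈ c, r A < rInf A + ε / 𝒜.card := by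
              intro A _
              have hlt : rInf A < rInf A + ε / 𝒜.card := by
                have : 0 < ε / 𝒜.card := div_pos hε hcard
                linarith
              obtain ⟨t, ⟨r, hrc, rfl⟩, htlt⟩ := exists_lt_of_csInf_lt (hsetne A) hlt
              exact ⟨r, hrc, htlt⟩
            obtain ⟨r, hrc, hrle⟩ := chain_exists hcchain hcne
              (fun A t => t < rInf A + ε / 𝒜.card) hchoice
              (fun A s t hst ht => lt_of_le_of_lt (hst A) ht)
            calc D.delta (𝒜.sup id) ≤ ∑ A ∈ 𝒜, r A := (hcS hrc).1.2 𝒜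
              _ ≤ ∑ A ∈ 𝒜, (rInf A + ε / 𝒜.card) := by
                  apply Finset.sum_le_sum
                  intro A hA
                  exact (hrle A hA).le
              _ = (∑ A ∈ 𝒜, rInf A) + ε := by
                  rw [Finset.sum_add_distrib, Finset.sum_const, nsmul_eq_mul]
                  congr 1
                  field_simp
        · intro z hz Y
          apply le_csInf (hsetne Y)
          rintro t ⟨r, hrc, rfl⟩
          have hzr : z ∈ Ball D r := ball_mono D (hle r hrc) hz
          exact (hcS hrc).2 hzr Y
      exact ⟨OrderDual.toDual rInf, hrInfS, fun r hrc => hle _ ⟨r, hrc, rfl⟩⟩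

end FPAux

namespace FPAux

variable {X : Type*} [DecidableEq X] (D : Diversity X)

lemma stepA (hH : D.Hyperconvex) (T : X → X)
    (hT : ∀ x y : X, D.delta {T x, T y} ≤ D.delta {x, y})
    {r₀ : Finset X → ℝ} (hr₀S : r₀ ∈ S D T) (hmin : ∀ r ∈ S D T, r ≤ r₀ → r₀ ≤ r)
    {ρ : ℝ} (hρ0 : 0 ≤ ρ)
    (hρ : ∀ F : Finset X, ↑F ⊆ Ball D r₀ → D.delta F ≤ F.card * ρ) :
    ∀ x ∈ Ball D r₀, ∀ b ∈ Ball D r₀, D.delta {x, b} ≤ ρ := by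
  classical
  obtain ⟨z₀, hz₀'⟩ := hH r₀ hr₀S.1.1 hr₀S.1.2
  have hz₀ : z₀ ∈ Ball D r₀ := hz₀'
  set q : Finset X → ℝ :=
    fun Y => if (∃ a, Y = {a} ∧ a ∈ Ball D r₀) then ρ else r₀ Y with hq
  set r₁ : Finset X → ℝ := fun Y => min (r₀ Y) (q Y) with hr₁
  have hr₁le : r₁ ≤ r₀ := fun Y => min_le_left _ _
  have hq_single : ∀ a ∈ Ball D r₀, q {a} = ρ := by
    intro a ha
    rw [hq]
    exact if_pos ⟨a, rfl, ha⟩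
  -- admissibility of r₁
  have hAdm₁ : Adm D r₁ := by
    constructor
    · have hqe : q ∅ = r₀ ∅ := by
        rw [hq]
        apply if_neg
        rintro ⟨a, ha, -⟩
        exact (Finset.singleton_ne_empty a) ha.symm
      rw [hr₁]
      simp only [hqe, hr₀S.1.1, min_self]
    · intro 𝒜
      set 𝒜₁ := 𝒜.filter (fun Y => r₁ Y = r₀ Y) with h𝒜₁
      set 𝒜₂ := 𝒜.filter (fun Y => ¬ r₁ Y = r₀ Y) with h𝒜₂
      have hsum : ∑ A ∈ 𝒜, r₁ A = ∑ A ∈ 𝒜₁, r₁ A + ∑ A ∈ 𝒜₂, r₁ A :=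
        (Finset.sum_filter_add_sum_filter_not 𝒜 _ _).symm
      have h2 : ∀ Y ∈ 𝒜₂, r₁ Y = ρ ∧ ∃ a, Y = {a} ∧ a ∈ Ball D r₀ := by
        intro Y hY
        have hne : ¬ r₁ Y = r₀ Y := (Finset.mem_filter.mp hY).2
        by_cases hcond : ∃ a, Y = {a} ∧ a ∈ Ball D r₀
        · have hqY : q Y = ρ := by rw [hq]; exact if_pos hcond
          refine ⟨?_, hcond⟩
          rcases min_cases (r₀ Y) (q Y) with ⟨h, -⟩ | ⟨h, -⟩
          · exact absurd h hne
          · show r₀ Y ⊓ q Y = ρ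
            rw [h, hqY]
        · exfalso
          apply hne
          have : q Y = r₀ Y := by rw [hq]; exact if_neg hcond
          rw [hr₁]; simp only [this, min_self]
      have hsum₁ : ∑ A ∈ 𝒜₁, r₁ A = ∑ A ∈ 𝒜₁, r₀ A :=
        Finset.sum_congr rfl (fun Y hY => (Finset.mem_filter.mp hY).2)
      have hsum₂ : ∑ A ∈ 𝒜₂, r₁ A = 𝒜₂.card * ρ := by
        rw [Finset.sum_congr rfl (fun Y hY => (h2 Y hY).1), Finset.sum_const,
          nsmul_eq_mul]
      have hδ₁ : D.delta (𝒜₁.sup id) ≤ ∑ A ∈ 𝒜₁, r₀ A := adm_sum_of_mem D hz₀ 𝒜₁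
      have hsup : 𝒜.sup id = 𝒜₁.sup id ∪ 𝒜₂.sup id := by
        rw [← Finset.sup_eq_union, ← Finset.sup_union, Finset.filter_union_filter_not_eq]
      rcases 𝒜₂.eq_empty_or_nonempty with h𝒜₂e | h𝒜₂ne
      · rw [hsum, hsum₁, hsum₂, h𝒜₂e]
        simp only [Finset.card_empty, Nat.cast_zero, zero_mul, add_zero]
        rw [hsup, h𝒜₂e]
        simpa using hδ₁
      · obtain ⟨Y₀, hY₀⟩ := h𝒜₂ne
        obtain ⟨-, a₁, rfl, ha₁⟩ := h2 Y₀ hY₀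
        have ha₁mem : a₁ ∈ 𝒜₂.sup id := Finset.mem_sup.mpr ⟨{a₁}, hY₀, by simp⟩
        have hsub : ↑(𝒜₂.sup id) ⊆ Ball D r₀ := by
          intro x hx
          obtain ⟨Y, hY, hxY⟩ := Finset.mem_sup.mp hx
          obtain ⟨-, a, rfl, ha⟩ := h2 Y hY
          simp only [id_eq, Finset.mem_singleton] at hxY
          exact hxY ▸ ha
        have hcard : (𝒜₂.sup id).card ≤ 𝒜₂.card := by
          rw [Finset.sup_eq_biUnion]
          calc (𝒜₂.biUnion id).card ≤ ∑ Y ∈ 𝒜₂, (id Y).card := Finset.card_biUnion_le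
            _ = ∑ _Y ∈ 𝒜₂, 1 := Finset.sum_congr rfl (fun Y hY => by
                obtain ⟨-, a, rfl, -⟩ := h2 Y hY
                simp)
            _ = 𝒜₂.card := by simp
        have hδ₂ : D.delta (𝒜₂.sup id) ≤ 𝒜₂.card * ρ := by
          calc D.delta (𝒜₂.sup id) ≤ (𝒜₂.sup id).card * ρ := hρ _ hsub
            _ ≤ 𝒜₂.card * ρ := by
                apply mul_le_mul_of_nonneg_right _ hρ0
                exact_mod_cast hcard
        have htri := D.triangle (𝒜₁.sup id) {a₁} (𝒜₂.sup id) (by simp)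
        have he1 : 𝒜₁.sup id ∪ {a₁} = insert a₁ (𝒜₁.sup id) := by
          rw [Finset.union_comm, ← Finset.insert_eq]
        have he2 : ({a₁} : Finset X) ∪ 𝒜₂.sup id = 𝒜₂.sup id :=
          Finset.union_eq_right.mpr (Finset.singleton_subset_iff.mpr ha₁mem)
        rw [he1, he2] at htri
        have hstar : D.delta (insert a₁ (𝒜₁.sup id)) ≤ ∑ A ∈ 𝒜₁, r₀ A :=
          le_trans (star D a₁ 𝒜₁) (Finset.sum_le_sum (fun A _ => ha₁ A))
        rw [hsum, hsum₁, hsum₂, hsup]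
        calc D.delta (𝒜₁.sup id ∪ 𝒜₂.sup id)
            ≤ D.delta (insert a₁ (𝒜₁.sup id)) + D.delta (𝒜₂.sup id) := htri
          _ ≤ ∑ A ∈ 𝒜₁, r₀ A + 𝒜₂.card * ρ := add_le_add hstar hδ₂
  -- T-invariance of Ball r₁
  have hInv₁ : Set.MapsTo T (Ball D r₁) (Ball D r₁) := by
    intro x hx
    have hxA : x ∈ Ball D r₀ := ball_mono D hr₁le hx
    have hTx : T x ∈ Ball D r₀ := hr₀S.2 hxA
    set r₂ : Finset X → ℝ :=
      fun Y => min (r₀ Y) (if Y = {T x} then ρ else r₀ Y) with hr₂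
    have hr₂le : r₂ ≤ r₀ := fun Y => min_le_left _ _
    have hTb : ∀ b ∈ Ball D r₀, T b ∈ Ball D r₂ := by
      intro b hb Y
      rw [hr₂]
      apply le_min (hr₀S.2 hb Y)
      by_cases hY : Y = {T x}
      · rw [if_pos hY, hY]
        have h1 : D.delta {T b, T x} ≤ D.delta {b, x} := hT b x
        have h2 : D.delta {b, x} ≤ ρ := by
          have h3 : D.delta (insert x {b}) ≤ r₁ {b} := hx {b}
          have h4 : r₁ {b} ≤ ρ := by
            rw [hr₁]
            calc min (r₀ {b}) (q {b}) ≤ q {b} := min_le_right _ _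
              _ = ρ := hq_single b hb
          calc D.delta {b, x} = D.delta (insert x {b}) := by rw [Finset.pair_comm]
            _ ≤ ρ := le_trans h3 h4
        exact le_trans h1 h2
      · rw [if_neg hY]
        exact hr₀S.2 hb Y
    have hAdm₂ : Adm D r₂ := by
      constructor
      · rw [hr₂]
        have : (∅ : Finset X) ≠ {T x} := (Finset.singleton_ne_empty (T x)).symm
        simp only [if_neg this, hr₀S.1.1, min_self]
      · exact adm_sum_of_mem D (hTb z₀ hz₀)
    have hInv₂ : Set.MapsTo T (Ball D r₂) (Ball D r₂) := by
      intro y hy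
      exact hTb y (ball_mono D hr₂le hy)
    have hminle : r₀ ≤ r₂ := hmin r₂ ⟨hAdm₂, hInv₂⟩ hr₂le
    have hball : ∀ a ∈ Ball D r₀, D.delta (insert a {T x}) ≤ ρ := by
      intro a ha
      have ha₂ : a ∈ Ball D r₂ := ball_mono D hminle ha
      calc D.delta (insert a {T x}) ≤ r₂ {T x} := ha₂ {T x}
        _ ≤ ρ := by rw [hr₂]; exact le_trans (min_le_right _ _) (le_of_eq (if_pos rfl))
    -- now T x ∈ Ball r₁
    intro Y
    rw [hr₁]
    apply le_min (hTx Y)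
    by_cases hcond : ∃ a, Y = {a} ∧ a ∈ Ball D r₀
    · obtain ⟨a, rfl, ha⟩ := hcond
      rw [hq_single a ha]
      calc D.delta (insert (T x) {a}) = D.delta (insert a {T x}) := by
            show D.delta {T x, a} = D.delta {a, T x}
            rw [Finset.pair_comm]
        _ ≤ ρ := hball a ha
    · show D.delta (insert (T x) Y) ≤ if ∃ a, Y = {a} ∧ a ∈ Ball D r₀ then ρ else r₀ Y
      rw [if_neg hcond]
      exact hTx Y
  -- minimality
  have hminle₁ : r₀ ≤ r₁ := hmin r₁ ⟨hAdm₁, hInv₁⟩ hr₁le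
  intro x hx b hb
  have hx₁ : x ∈ Ball D r₁ := ball_mono D hminle₁ hx
  calc D.delta {x, b} = D.delta (insert x {b}) := rfl
    _ ≤ r₁ {b} := hx₁ {b}
    _ ≤ ρ := by
        rw [hr₁]
        exact le_trans (min_le_right _ _) (le_of_eq (hq_single b hb))

end FPAux

/-- If `(X, δ)` is a hyperconvex and bounded diversity and
`T : X → X` is nonexpansive with respect to the induced metric `d(x,y) = δ {x,y}`,
then `T` has a fixed point. -/
theorem fixed_point_of_bounded_hyperconvex_diversity
    {X : Type*} [DecidableEq X] (D : Diversity X)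
    (hH : D.Hyperconvex) (hB : D.Bounded)
    (T : X → X)
    (hT : ∀ x y : X, D.delta {T x, T y} ≤ D.delta {x, y}) :
    ∃ x : X, T x = x := by
  classical
  open FPAux in
  obtain ⟨M, hM0, hM⟩ := hB
  obtain ⟨r₀, hr₀S, hmin⟩ := exists_minimal D ⟨M, hM0, hM⟩ T
  obtain ⟨z₀, hz₀'⟩ := hH r₀ hr₀S.1.1 hr₀S.1.2
  have hz₀ : z₀ ∈ Ball D r₀ := hz₀'
  set A := Ball D r₀ with hA
  -- the diversity diameter of A
  set SΔ : Set ℝ := {t | ∃ F : Finset X, ↑F ⊆ A ∧ t = D.delta F} with hSΔ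
  have hSΔne : SΔ.Nonempty := ⟨0, ∅, by simp, (delta_empty D).symm⟩
  have hSΔbdd : BddAbove SΔ := ⟨M, by rintro t ⟨F, -, rfl⟩; exact hM F⟩
  set Δ : ℝ := sSup SΔ with hΔ
  -- the pair diameter of A
  set Sp : Set ℝ := {t | ∃ x ∈ A, ∃ y ∈ A, t = D.delta {x, y}} with hSp
  have hSpne : Sp.Nonempty := ⟨D.delta {z₀, z₀}, z₀, hz₀, z₀, hz₀, rfl⟩
  have hSpsub : ∀ t ∈ Sp, t ∈ SΔ := by
    rintro t ⟨x, hx, y, hy, rfl⟩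
    exact ⟨{x, y}, by
      intro u hu
      simp only [Finset.coe_insert, Finset.coe_singleton, Set.mem_insert_iff,
        Set.mem_singleton_iff] at hu
      rcases hu with rfl | rfl
      · exact hx
      · exact hy, rfl⟩
  have hSpbdd : BddAbove Sp := ⟨M, by rintro t ⟨x, -, y, -, rfl⟩; exact hM _⟩
  set p : ℝ := sSup Sp with hp
  have hpair_le : ∀ x ∈ A, ∀ y ∈ A, D.delta {x, y} ≤ p := by
    intro x hx y hy
    exact le_csSup hSpbdd ⟨x, hx, y, hy, rfl⟩
  have hdelta_le : ∀ F : Finset X, ↑F ⊆ A → D.delta F ≤ Δ := by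
    intro F hF
    exact le_csSup hSΔbdd ⟨F, hF, rfl⟩
  -- chaining bound
  have hchain : ∀ F : Finset X, ↑F ⊆ A → F.Nonempty →
      D.delta F ≤ ((F.card : ℝ) - 1) * p := by
    intro F hF hFne
    obtain ⟨a, ha⟩ := hFne
    have haA : a ∈ A := hF ha
    have h1 : D.delta (insert a (F.erase a)) ≤ ∑ b ∈ F.erase a, D.delta {a, b} :=
      star_pairs D a (F.erase a)
    rw [Finset.insert_erase ha] at h1
    have h2 : ∑ b ∈ F.erase a, D.delta {a, b} ≤ (F.erase a).card * p := by
      calc ∑ b ∈ F.erase a, D.delta {a, b} ≤ ∑ _b ∈ F.erase a, p := by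
            apply Finset.sum_le_sum
            intro b hb
            exact hpair_le a haA b (hF (Finset.mem_of_mem_erase hb))
        _ = (F.erase a).card * p := by rw [Finset.sum_const, nsmul_eq_mul]
    have h3 : ((F.erase a).card : ℝ) = (F.card : ℝ) - 1 := by
      rw [Finset.card_erase_of_mem ha]
      have : 1 ≤ F.card := Finset.card_pos.mpr ⟨a, ha⟩
      push_cast [Nat.cast_sub this]
      ring
    rw [h3] at h2
    exact le_trans h1 h2
  by_cases hppos : p ≤ 0
  · -- all pairs coincide; the space A is a single point
    have hsingle : ∀ x ∈ A, ∀ y ∈ A, x = y := by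
      intro x hx y hy
      have h0 : D.delta {x, y} = 0 :=
        le_antisymm (le_trans (hpair_le x hx y hy) hppos) (D.nonneg _)
      have hcard := (D.eq_zero_iff {x, y}).mp h0
      by_contra hne
      rw [Finset.card_pair hne] at hcard
      omega
    have hTz₀ : T z₀ ∈ A := hr₀S.2 hz₀
    exact ⟨z₀, hsingle (T z₀) hTz₀ z₀ hz₀⟩
  · push_neg at hppos
    have hpΔ : p ≤ Δ := csSup_le hSpne (fun t ht => le_csSup hSΔbdd (hSpsub t ht))
    have hΔpos : 0 < Δ := lt_of_lt_of_le hppos hpΔ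
    have hden : (0:ℝ) < Δ + p := by linarith
    set ρ : ℝ := Δ * p / (Δ + p) with hρdef
    have hρ_eq : ρ * (Δ + p) = Δ * p := by
      rw [hρdef]; field_simp
    have hρ0 : 0 ≤ ρ := div_nonneg (mul_nonneg hΔpos.le hppos.le) hden.le
    have hρhyp : ∀ F : Finset X, ↑F ⊆ Ball D r₀ → D.delta F ≤ (F.card : ℝ) * ρ := by
      intro F hF
      rcases F.eq_empty_or_nonempty with rfl | hFne
      · simp [delta_empty]
      · have h1 : D.delta F ≤ Δ := hdelta_le F hF
        have h2 : D.delta F ≤ ((F.card : ℝ) - 1) * p := hchain F hF hFne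
        set k : ℝ := (F.card : ℝ) with hk
        by_cases hcase : (k - 1) * p ≤ Δ
        · have h5 : (k - 1) * p * (Δ + p) ≤ k * ρ * (Δ + p) := by
            rw [mul_assoc k, hρ_eq]
            nlinarith [hppos.le, hcase]
          exact le_trans h2 ((mul_le_mul_iff_left₀ hden).mp h5)
        · push_neg at hcase
          have h5 : Δ * (Δ + p) ≤ k * ρ * (Δ + p) := by
            rw [mul_assoc k, hρ_eq]
            nlinarith [hΔpos.le, hcase]
          exact le_trans h1 ((mul_le_mul_iff_left₀ hden).mp h5)
    have hstep := stepA D hH T hT hr₀S hmin hρ0 hρhyp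
    have hple : p ≤ ρ := by
      apply csSup_le hSpne
      rintro t ⟨x, hx, y, hy, rfl⟩
      exact hstep x hx y hy
    have hlt : ρ < p := by
      nlinarith [hρ_eq, hppos]
    linarith
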